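/- If there is a constant C > 0 such that √γ_k ≤ C(√γ_{k−j} + √γ_j) for all k, j ∈ ℤ, then for all u, v ∈ H_γ(𝕋) with Fourier coefficients in ℓ¹, one has |uv|_γ ≤ C'(|u|_γ ‖v̂‖_{ℓ¹} + |v|_γ ‖û‖_{ℓ¹}) for some constant C' depending only on C. -/

import Mathlib

open ENNReal MeasureTheory

lemma ofReal_norm_eq_coe_nnnorm {E : Type*} [SeminormedAddGroup E] (a : E) :
    ENNReal.ofReal ‖a‖ = (‖a‖₊ : ℝ≥0∞) := ofReal_norm a

namespace Stmt3Aux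

lemma meas (f : ℤ → ℝ≥0∞) : AEMeasurable f (Measure.count : Measure ℤ) :=
  (measurable_of_countable f).aemeasurable

lemma half_half (x : ℝ≥0∞) : x ^ (1/2 : ℝ) * x ^ (1/2 : ℝ) = x := by
  rw [← ENNReal.rpow_add_of_nonneg _ _ (by norm_num) (by norm_num)]
  norm_num

/-- Cauchy–Schwarz for `tsum` over `ℤ` in `ℝ≥0∞`. -/
lemma cs (f g : ℤ → ℝ≥0∞) :
    ∑' k, f k * g k ≤ (∑' k, f k ^ (2:ℝ)) ^ (1/2:ℝ) * (∑' k, g k ^ (2:ℝ)) ^ (1/2:ℝ) := by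
  have hpq : Real.HolderConjugate 2 2 := ⟨by norm_num, by norm_num, by norm_num⟩
  have := ENNReal.lintegral_mul_le_Lp_mul_Lq (Measure.count : Measure ℤ) hpq (meas f) (meas g)
  simpa [MeasureTheory.lintegral_count] using this

/-- Minkowski for `tsum` over `ℤ` in `ℝ≥0∞`, `p = 2`. -/
lemma mink (f g : ℤ → ℝ≥0∞) :
    (∑' k, (f k + g k) ^ (2:ℝ)) ^ (1/2:ℝ) ≤
      (∑' k, f k ^ (2:ℝ)) ^ (1/2:ℝ) + (∑' k, g k ^ (2:ℝ)) ^ (1/2:ℝ) := by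
  have := ENNReal.lintegral_Lp_add_le (μ := (Measure.count : Measure ℤ))
    (meas f) (meas g) (p := 2) one_le_two
  simpa [MeasureTheory.lintegral_count] using this

/-- Young's inequality `‖a ⋆ b‖₂ ≤ ‖a‖₂ ‖b‖₁` in `ℝ≥0∞`. -/
lemma young (a b : ℤ → ℝ≥0∞) :
    (∑' k, (∑' j, a (k - j) * b j) ^ (2:ℝ)) ^ (1/2:ℝ) ≤
      (∑' k, a k ^ (2:ℝ)) ^ (1/2:ℝ) * ∑' j, b j := by
  set A := ∑' k, a k ^ (2:ℝ) with hA
  set B := ∑' j, b j with hB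
  have hshift : ∀ j : ℤ, (∑' k, a (k - j) ^ (2:ℝ)) = A :=
    fun j => (Equiv.subRight j).tsum_eq (fun k => a k ^ (2:ℝ))
  have hcs : ∀ j i : ℤ, (∑' k, a (k - j) * a (k - i)) ≤ A := by
    intro j i
    calc (∑' k, a (k - j) * a (k - i))
        ≤ (∑' k, a (k - j) ^ (2:ℝ)) ^ (1/2:ℝ) * (∑' k, a (k - i) ^ (2:ℝ)) ^ (1/2:ℝ) :=
          cs _ _
      _ = A ^ (1/2:ℝ) * A ^ (1/2:ℝ) := by rw [hshift, hshift]
      _ = A := half_half A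
  have hT : (∑' k, (∑' j, a (k - j) * b j) ^ (2:ℝ)) ≤ A * (B * B) := by
    have hexp : ∀ k : ℤ, (∑' j, a (k - j) * b j) ^ (2:ℝ)
        = ∑' j, ∑' i, (a (k - j) * b j) * (a (k - i) * b i) := by
      intro k
      rw [show ((2:ℝ)) = ((2:ℕ) : ℝ) by norm_num, ENNReal.rpow_natCast, sq,
        ← ENNReal.tsum_mul_right]
      exact tsum_congr fun j => (ENNReal.tsum_mul_left).symm
    calc (∑' k, (∑' j, a (k - j) * b j) ^ (2:ℝ))
        = ∑' k, ∑' j, ∑' i, (a (k - j) * b j) * (a (k - i) * b i) :=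
          tsum_congr hexp
      _ = ∑' j, ∑' i, ∑' k, (a (k - j) * b j) * (a (k - i) * b i) := by
          rw [ENNReal.tsum_comm]
          exact tsum_congr fun j => ENNReal.tsum_comm
      _ = ∑' j, ∑' i, (b j * b i) * ∑' k, a (k - j) * a (k - i) := by
          refine tsum_congr fun j => tsum_congr fun i => ?_
          rw [← ENNReal.tsum_mul_left]
          exact tsum_congr fun k => by ring
      _ ≤ ∑' j, ∑' i, (b j * b i) * A :=
          ENNReal.tsum_le_tsum fun j => ENNReal.tsum_le_tsum fun i =>
            mul_le_mul_right (hcs j i) _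
      _ = A * (B * B) := by
          have h1 : ∀ j : ℤ, (∑' i, (b j * b i) * A) = b j * (B * A) := by
            intro j
            rw [show (fun i => (b j * b i) * A) = (fun i => b j * (b i * A)) from
              funext fun i => by ring, ENNReal.tsum_mul_left, ENNReal.tsum_mul_right]
          rw [tsum_congr h1, ENNReal.tsum_mul_right, ← hB]
          ring
  calc (∑' k, (∑' j, a (k - j) * b j) ^ (2:ℝ)) ^ (1/2:ℝ)
      ≤ (A * (B * B)) ^ (1/2:ℝ) := ENNReal.rpow_le_rpow hT (by norm_num)
    _ = A ^ (1/2:ℝ) * (B ^ (1/2:ℝ) * B ^ (1/2:ℝ)) := by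
        rw [ENNReal.mul_rpow_of_nonneg _ _ (by norm_num),
          ENNReal.mul_rpow_of_nonneg _ _ (by norm_num)]
    _ = A ^ (1/2:ℝ) * B := by rw [half_half]

end Stmt3Aux

namespace Stmt3Aux

/-- The main estimate in `ℝ≥0∞`. -/
lemma key (c : ℝ≥0∞) (G eu ev F : ℤ → ℝ≥0∞)
    (hG : ∀ k j : ℤ, G k ≤ c * (G (k - j) + G j))
    (hF : ∀ k, F k ≤ ∑' j, eu (k - j) * ev j) :
    (∑' k, (G k * F k) ^ (2:ℝ)) ^ (1/2:ℝ) ≤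
      c * ((∑' k, (G k * eu k) ^ (2:ℝ)) ^ (1/2:ℝ) * ∑' j, ev j
         + (∑' k, (G k * ev k) ^ (2:ℝ)) ^ (1/2:ℝ) * ∑' j, eu j) := by
  set a1 := fun k => G k * eu k with ha1
  set a2 := fun k => G k * ev k with ha2
  set S1 := fun k => ∑' j, a1 (k - j) * ev j with hS1def
  set S2 := fun k => ∑' j, a2 (k - j) * eu j with hS2def
  have hpt : ∀ k, G k * F k ≤ c * (S1 k + S2 k) := by
    intro k
    have h1 : G k * F k ≤ ∑' j, G k * (eu (k - j) * ev j) := by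
      rw [ENNReal.tsum_mul_left]
      exact mul_le_mul_right (hF k) _
    have h2 : ∀ j, G k * (eu (k - j) * ev j)
        ≤ c * (a1 (k - j) * ev j) + c * (a2 j * eu (k - j)) := by
      intro j
      calc G k * (eu (k - j) * ev j)
          ≤ (c * (G (k - j) + G j)) * (eu (k - j) * ev j) :=
            mul_le_mul_left (hG k j) _
        _ = c * ((G (k - j) * eu (k - j)) * ev j) + c * ((G j * ev j) * eu (k - j)) := by
            ring
        _ = c * (a1 (k - j) * ev j) + c * (a2 j * eu (k - j)) := rfl
    have hS2 : (∑' j, a2 j * eu (k - j)) = S2 k := by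
      have h := (Equiv.subLeft k).tsum_eq (fun j => a2 (k - j) * eu j)
      simp only [Equiv.subLeft_apply] at h
      show _ = ∑' j, a2 (k - j) * eu j
      rw [← h]
      exact tsum_congr fun c => by rw [_root_.sub_sub_cancel]
    calc G k * F k ≤ ∑' j, G k * (eu (k - j) * ev j) := h1
      _ ≤ ∑' j, (c * (a1 (k - j) * ev j) + c * (a2 j * eu (k - j))) :=
          ENNReal.tsum_le_tsum h2
      _ = c * S1 k + c * (∑' j, a2 j * eu (k - j)) := by
          rw [ENNReal.tsum_add, ENNReal.tsum_mul_left, ENNReal.tsum_mul_left]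
      _ = c * (S1 k + S2 k) := by rw [hS2]; ring
  calc (∑' k, (G k * F k) ^ (2:ℝ)) ^ (1/2:ℝ)
      ≤ (∑' k, (c * (S1 k + S2 k)) ^ (2:ℝ)) ^ (1/2:ℝ) :=
        ENNReal.rpow_le_rpow (ENNReal.tsum_le_tsum fun k =>
          ENNReal.rpow_le_rpow (hpt k) (by norm_num)) (by norm_num)
    _ = c * (∑' k, (S1 k + S2 k) ^ (2:ℝ)) ^ (1/2:ℝ) := by
        have h3 : ∀ k, (c * (S1 k + S2 k)) ^ (2:ℝ) = c ^ (2:ℝ) * (S1 k + S2 k) ^ (2:ℝ) :=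
          fun k => ENNReal.mul_rpow_of_nonneg _ _ (by norm_num)
        rw [tsum_congr h3, ENNReal.tsum_mul_left,
          ENNReal.mul_rpow_of_nonneg _ _ (by norm_num), ← ENNReal.rpow_mul]
        norm_num
    _ ≤ c * ((∑' k, S1 k ^ (2:ℝ)) ^ (1/2:ℝ) + (∑' k, S2 k ^ (2:ℝ)) ^ (1/2:ℝ)) :=
        mul_le_mul_right (mink S1 S2) c
    _ ≤ c * ((∑' k, a1 k ^ (2:ℝ)) ^ (1/2:ℝ) * ∑' j, ev j
           + (∑' k, a2 k ^ (2:ℝ)) ^ (1/2:ℝ) * ∑' j, eu j) :=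
        mul_le_mul_right (add_le_add (young a1 ev) (young a2 eu)) c

lemma ofReal_sqrt_tsum_le (f : ℤ → ℝ) (hf : ∀ k, 0 ≤ f k) :
    ENNReal.ofReal (Real.sqrt (∑' k, f k)) ≤ (∑' k, ENNReal.ofReal (f k)) ^ (1/2:ℝ) := by
  by_cases h : Summable f
  · rw [← ENNReal.ofReal_tsum_of_nonneg hf h, Real.sqrt_eq_rpow,
      ENNReal.ofReal_rpow_of_nonneg (tsum_nonneg hf) (by norm_num)]
  · simp [tsum_eq_zero_of_not_summable h]

lemma ofReal_sqrt_tsum_eq (f : ℤ → ℝ) (hf : ∀ k, 0 ≤ f k) (h : Summable f) :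
    (∑' k, ENNReal.ofReal (f k)) ^ (1/2:ℝ) = ENNReal.ofReal (Real.sqrt (∑' k, f k)) := by
  rw [← ENNReal.ofReal_tsum_of_nonneg hf h, Real.sqrt_eq_rpow,
    ENNReal.ofReal_rpow_of_nonneg (tsum_nonneg hf) (by norm_num)]

lemma ofReal_weight_sq (γk : ℝ) (hγk : 0 < γk) (w : ℂ) :
    ENNReal.ofReal (γk * ‖w‖ ^ 2)
      = (ENNReal.ofReal (Real.sqrt γk) * (‖w‖₊ : ℝ≥0∞)) ^ (2:ℝ) := by
  have h1 : γk * ‖w‖ ^ 2 = (Real.sqrt γk * ‖w‖) ^ 2 := by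
    rw [mul_pow, Real.sq_sqrt hγk.le]
  rw [h1, show ((2:ℝ)) = ((2:ℕ) : ℝ) by norm_num, ENNReal.rpow_natCast, sq, sq,
    ENNReal.ofReal_mul (by positivity), ENNReal.ofReal_mul (Real.sqrt_nonneg _),
    ofReal_norm_eq_coe_nnnorm]

end Stmt3Aux

/-- Fourier coefficients of a product: convolution. -/
noncomputable def fourierConv (u v : ℤ → ℂ) (k : ℤ) : ℂ := ∑' j : ℤ, u (k - j) * v j

/-- If `√γ k ≤ C (√γ (k-j) + √γ j)` for all `k, j`, then
`|uv|_γ ≤ C' (|u|_γ ‖v̂‖_{ℓ¹} + |v|_γ ‖û‖_{ℓ¹})` for some `C'` depending only on `C`. -/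
theorem stmt3 (C : ℝ) (hC : 0 < C) :
    ∃ C' > 0, ∀ γ : ℤ → ℝ, (∀ k, 0 < γ k) →
      (∀ k j : ℤ, Real.sqrt (γ k) ≤ C * (Real.sqrt (γ (k - j)) + Real.sqrt (γ j))) →
      ∀ u v : ℤ → ℂ,
        Summable (fun k => γ k * ‖u k‖ ^ 2) → Summable (fun k => γ k * ‖v k‖ ^ 2) →
        Summable (fun k => ‖u k‖) → Summable (fun k => ‖v k‖) →
        Real.sqrt (∑' k : ℤ, γ k * ‖fourierConv u v k‖ ^ 2) ≤
          C' * (Real.sqrt (∑' k : ℤ, γ k * ‖u k‖ ^ 2) * (∑' k : ℤ, ‖v k‖) +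
                Real.sqrt (∑' k : ℤ, γ k * ‖v k‖ ^ 2) * (∑' k : ℤ, ‖u k‖)) := by
  refine ⟨C, hC, ?_⟩
  intro γ hγ hquasi u v hu2 hv2 hu1 hv1
  set c : ℝ≥0∞ := ENNReal.ofReal C with hc
  set G : ℤ → ℝ≥0∞ := fun k => ENNReal.ofReal (Real.sqrt (γ k)) with hGdef
  set eu : ℤ → ℝ≥0∞ := fun k => (‖u k‖₊ : ℝ≥0∞) with heu
  set ev : ℤ → ℝ≥0∞ := fun k => (‖v k‖₊ : ℝ≥0∞) with hev
  set F : ℤ → ℝ≥0∞ := fun k => (‖fourierConv u v k‖₊ : ℝ≥0∞) with hFdef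
  have hG : ∀ k j : ℤ, G k ≤ c * (G (k - j) + G j) := by
    intro k j
    show ENNReal.ofReal (Real.sqrt (γ k)) ≤ c * (ENNReal.ofReal (Real.sqrt (γ (k - j)))
      + ENNReal.ofReal (Real.sqrt (γ j)))
    rw [hc, ← ENNReal.ofReal_add (Real.sqrt_nonneg _) (Real.sqrt_nonneg _),
      ← ENNReal.ofReal_mul hC.le]
    exact ENNReal.ofReal_le_ofReal (hquasi k j)
  have hF : ∀ k, F k ≤ ∑' j, eu (k - j) * ev j := by
    intro k
    have hbu : ∀ i, ‖u i‖ ≤ ∑' n, ‖u n‖ := fun i => Summable.le_tsum hu1 i (fun _ _ => norm_nonneg _)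
    have hsum : Summable (fun j => ‖u (k - j)‖ * ‖v j‖) :=
      Summable.of_nonneg_of_le (fun j => by positivity)
        (fun j => mul_le_mul_of_nonneg_right (hbu _) (norm_nonneg _))
        (hv1.mul_left (∑' n, ‖u n‖))
    have hnorm : ‖fourierConv u v k‖ ≤ ∑' j, ‖u (k - j)‖ * ‖v j‖ := by
      have h := norm_tsum_le_tsum_norm (f := fun j => u (k - j) * v j)
        (by simpa [norm_mul] using hsum)
      simpa [fourierConv, norm_mul] using h
    calc F k = ENNReal.ofReal ‖fourierConv u v k‖ := (ofReal_norm_eq_coe_nnnorm _).symm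
      _ ≤ ENNReal.ofReal (∑' j, ‖u (k - j)‖ * ‖v j‖) := ENNReal.ofReal_le_ofReal hnorm
      _ = ∑' j, ENNReal.ofReal (‖u (k - j)‖ * ‖v j‖) :=
          ENNReal.ofReal_tsum_of_nonneg (fun j => by positivity) hsum
      _ = ∑' j, eu (k - j) * ev j := tsum_congr fun j => by
          rw [ENNReal.ofReal_mul (norm_nonneg _), ofReal_norm_eq_coe_nnnorm,
            ofReal_norm_eq_coe_nnnorm]
  have hkey := Stmt3Aux.key c G eu ev F hG hF
  have hLHS : ENNReal.ofReal (Real.sqrt (∑' k, γ k * ‖fourierConv u v k‖ ^ 2))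
      ≤ (∑' k, (G k * F k) ^ (2:ℝ)) ^ (1/2:ℝ) := by
    refine le_trans (Stmt3Aux.ofReal_sqrt_tsum_le _ (fun k => mul_nonneg (hγ k).le (sq_nonneg _))) (le_of_eq ?_)
    exact congrArg (· ^ (1/2:ℝ))
      (tsum_congr fun k => Stmt3Aux.ofReal_weight_sq (γ k) (hγ k) _)
  have hu2' : (∑' k, (G k * eu k) ^ (2:ℝ)) ^ (1/2:ℝ)
      = ENNReal.ofReal (Real.sqrt (∑' k, γ k * ‖u k‖ ^ 2)) := by
    rw [tsum_congr (fun k => (Stmt3Aux.ofReal_weight_sq (γ k) (hγ k) (u k)).symm)]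
    exact Stmt3Aux.ofReal_sqrt_tsum_eq _ (fun k => mul_nonneg (hγ k).le (sq_nonneg _)) hu2
  have hv2' : (∑' k, (G k * ev k) ^ (2:ℝ)) ^ (1/2:ℝ)
      = ENNReal.ofReal (Real.sqrt (∑' k, γ k * ‖v k‖ ^ 2)) := by
    rw [tsum_congr (fun k => (Stmt3Aux.ofReal_weight_sq (γ k) (hγ k) (v k)).symm)]
    exact Stmt3Aux.ofReal_sqrt_tsum_eq _ (fun k => mul_nonneg (hγ k).le (sq_nonneg _)) hv2
  have huB : (∑' k, eu k) = ENNReal.ofReal (∑' k, ‖u k‖) := by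
    rw [ENNReal.ofReal_tsum_of_nonneg (fun k => norm_nonneg _) hu1]
    exact tsum_congr fun k => (ofReal_norm_eq_coe_nnnorm _).symm
  have hvB : (∑' k, ev k) = ENNReal.ofReal (∑' k, ‖v k‖) := by
    rw [ENNReal.ofReal_tsum_of_nonneg (fun k => norm_nonneg _) hv1]
    exact tsum_congr fun k => (ofReal_norm_eq_coe_nnnorm _).symm
  have hx1 : (0:ℝ) ≤ Real.sqrt (∑' k, γ k * ‖u k‖ ^ 2) := Real.sqrt_nonneg _
  have hx2 : (0:ℝ) ≤ Real.sqrt (∑' k, γ k * ‖v k‖ ^ 2) := Real.sqrt_nonneg _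
  have hy1 : (0:ℝ) ≤ ∑' k, ‖v k‖ := tsum_nonneg fun k => norm_nonneg _
  have hy2 : (0:ℝ) ≤ ∑' k, ‖u k‖ := tsum_nonneg fun k => norm_nonneg _
  have hRHS : c * ((∑' k, (G k * eu k) ^ (2:ℝ)) ^ (1/2:ℝ) * ∑' j, ev j
        + (∑' k, (G k * ev k) ^ (2:ℝ)) ^ (1/2:ℝ) * ∑' j, eu j)
      = ENNReal.ofReal (C * (Real.sqrt (∑' k, γ k * ‖u k‖ ^ 2) * (∑' k, ‖v k‖)
        + Real.sqrt (∑' k, γ k * ‖v k‖ ^ 2) * (∑' k, ‖u k‖))) := by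
    rw [hu2', hv2', huB, hvB, ← ENNReal.ofReal_mul hx1, ← ENNReal.ofReal_mul hx2,
      ← ENNReal.ofReal_add (by positivity) (by positivity), hc, ← ENNReal.ofReal_mul hC.le]
  have hfinal := (hLHS.trans hkey).trans_eq hRHS
  exact (ENNReal.ofReal_le_ofReal_iff (by positivity)).mp hfinal
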